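/- With g ~ N(0,1) independent of a₁ (where a₁ ~ N(0, 1 + λη₁²)) and f differentiable with polynomial growth, the gradient of the population loss at the origin satisfies ∂φ/∂x₁(0,0) = E[2(f(g)f'(g)a₁ − f(a₁)f'(g)a₁)] = −2(1 + λη₁²)·E[f'(a₁)]·E[f'(g)]. -/

import Mathlib

open MeasureTheory ProbabilityTheory Real
open scoped NNReal ENNReal

/-- `f` has at most polynomial growth. -/
def PolyGrowth (f : ℝ → ℝ) : Prop :=
  ∃ C : ℝ, ∃ n : ℕ, ∀ x : ℝ, |f x| ≤ C * (1 + |x|) ^ n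


lemma integrable_poly_exp {b : ℝ} (hb : 0 < b) (n : ℕ) :
    Integrable (fun x : ℝ => (1 + |x|) ^ n * Real.exp (-b * x ^ 2)) := by
  have h1 : Integrable (fun x : ℝ => Real.exp (-b * x ^ 2)) := integrable_exp_neg_mul_sq hb
  have h2 : Integrable (fun x : ℝ => |x ^ n * Real.exp (-b * x ^ 2)|) := by
    have := (integrable_rpow_mul_exp_neg_mul_sq hb
      (lt_of_lt_of_le (by norm_num) (Nat.cast_nonneg n))).abs
    refine this.congr (Filter.Eventually.of_forall fun x => ?_)
    simp only [Real.rpow_natCast]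
  have h3 : Integrable (fun x : ℝ =>
      (2:ℝ)^n * Real.exp (-b * x ^ 2) + (2:ℝ)^n * |x ^ n * Real.exp (-b * x ^ 2)|) :=
    (h1.const_mul _).add (h2.const_mul _)
  refine h3.mono' ?_ ?_
  · exact ((continuous_const.add continuous_abs).pow n |>.mul
      ((continuous_const.mul (continuous_pow 2)).rexp)).aestronglyMeasurable
  · filter_upwards with x
    have hexp : 0 ≤ Real.exp (-b * x ^ 2) := (Real.exp_pos _).le
    have habs : (1 + |x|) ^ n ≤ (2:ℝ)^n + (2:ℝ)^n * |x| ^ n := by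
      have h4 : (1 + |x|) ≤ 2 * max 1 |x| := by
        rcases le_total 1 |x| with h | h
        · rw [max_eq_right h]; linarith
        · rw [max_eq_left h]; linarith [abs_nonneg x]
      calc (1 + |x|) ^ n ≤ (2 * max 1 |x|) ^ n :=
            pow_le_pow_left₀ (by positivity) h4 n
        _ = 2^n * max 1 |x| ^ n := by rw [mul_pow]
        _ ≤ 2^n * (1 + |x| ^ n) := by
            refine mul_le_mul_of_nonneg_left ?_ (by positivity)
            rcases le_total 1 |x| with h | h
            · rw [max_eq_right h]; nlinarith [pow_nonneg (abs_nonneg x) n]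
            · rw [max_eq_left h, one_pow]
              nlinarith [pow_nonneg (abs_nonneg x) n]
        _ = 2^n + 2^n * |x| ^ n := by ring
    rw [Real.norm_eq_abs, abs_of_nonneg (by positivity)]
    calc (1 + |x|) ^ n * Real.exp (-b * x ^ 2)
        ≤ ((2:ℝ)^n + (2:ℝ)^n * |x| ^ n) * Real.exp (-b * x ^ 2) :=
          mul_le_mul_of_nonneg_right habs hexp
      _ = (2:ℝ)^n * Real.exp (-b * x ^ 2) + (2:ℝ)^n * |x ^ n * Real.exp (-b * x ^ 2)| := by
          rw [abs_mul, abs_of_nonneg hexp, abs_pow]; ring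

lemma integrable_poly_pdf (v : ℝ≥0) (hv : v ≠ 0) (n : ℕ) :
    Integrable (fun x : ℝ => (1 + |x|) ^ n * gaussianPDFReal 0 v x) := by
  have hv' : (0:ℝ) < v := lt_of_le_of_ne v.coe_nonneg (by exact_mod_cast (Ne.symm hv))
  have h := (integrable_poly_exp (b := 1/(2*(v:ℝ))) (by positivity) n).const_mul
    ((Real.sqrt (2 * π * v))⁻¹)
  refine h.congr (Filter.Eventually.of_forall fun x => ?_)
  simp only [gaussianPDFReal]
  rw [sub_zero]
  have : -(1/(2*(v:ℝ))) * x ^ 2 = -x ^ 2 / (2 * v) := by field_simp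
  rw [← this]; ring

lemma integrable_mul_pdf (v : ℝ≥0) (hv : v ≠ 0) {G : ℝ → ℝ} (hG : Measurable G)
    (hg : PolyGrowth G) : Integrable (fun x : ℝ => G x * gaussianPDFReal 0 v x) := by
  obtain ⟨C, n, hC⟩ := hg
  refine ((integrable_poly_pdf v hv n).const_mul C).mono'
    (hG.mul (measurable_gaussianPDFReal 0 v)).aestronglyMeasurable
    (Filter.Eventually.of_forall fun x => ?_)
  have hp := gaussianPDFReal_nonneg 0 v x
  rw [Real.norm_eq_abs, abs_mul, abs_of_nonneg hp, mul_comm C]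
  exact mul_le_mul_of_nonneg_right (by simpa using hC x) hp |>.trans (le_of_eq (by ring))

lemma integrable_gaussian_of_poly (v : ℝ≥0) {F : ℝ → ℝ} (hF : Measurable F)
    (hg : PolyGrowth F) : Integrable F (gaussianReal 0 v) := by
  by_cases hv : v = 0
  · rw [hv, gaussianReal_zero_var]
    have hae : ∀ᵐ x ∂(Measure.dirac (0:ℝ)), F 0 = F x := by
      simp [MeasureTheory.ae_dirac_eq]
    exact (integrable_const (F 0)).congr hae
  · rw [gaussianReal_of_var_ne_zero _ hv]
    rw [integrable_withDensity_iff (measurable_gaussianPDF 0 v)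
      (Filter.Eventually.of_forall fun x => ENNReal.ofReal_lt_top)]
    refine (integrable_mul_pdf v hv hF hg).congr
      (Filter.Eventually.of_forall fun x => ?_)
    simp [gaussianPDF, ENNReal.toReal_ofReal (gaussianPDFReal_nonneg 0 v x)]

lemma integral_gaussian_eq (v : ℝ≥0) (hv : v ≠ 0) (F : ℝ → ℝ) :
    ∫ x, F x ∂(gaussianReal 0 v) = ∫ x, F x * gaussianPDFReal 0 v x := by
  rw [gaussianReal_of_var_ne_zero _ hv]
  have hd : gaussianPDF 0 v = fun x => ((Real.toNNReal (gaussianPDFReal 0 v x) : ℝ≥0) : ℝ≥0∞) :=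
    rfl
  rw [hd, integral_withDensity_eq_integral_smul
    ((measurable_gaussianPDFReal 0 v).real_toNNReal) F]
  refine integral_congr_ae (Filter.Eventually.of_forall fun x => ?_)
  simp only [NNReal.smul_def, smul_eq_mul,
    Real.coe_toNNReal _ (gaussianPDFReal_nonneg 0 v x), mul_comm]

lemma polyGrowth_mul {F G : ℝ → ℝ} (hF : PolyGrowth F) (hG : PolyGrowth G) :
    PolyGrowth (fun x => F x * G x) := by
  obtain ⟨C, n, hC⟩ := hF
  obtain ⟨D, m, hD⟩ := hG
  have hC0 : 0 ≤ C := le_trans (abs_nonneg (F 0)) (by simpa using hC 0)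
  refine ⟨C * D, n + m, fun x => ?_⟩
  have h1 : (0:ℝ) ≤ 1 + |x| := by positivity
  rw [abs_mul, pow_add]
  calc |F x| * |G x| ≤ (C * (1 + |x|) ^ n) * (D * (1 + |x|) ^ m) :=
        mul_le_mul (hC x) (hD x) (abs_nonneg _) (by positivity)
    _ = C * D * ((1 + |x|) ^ n * (1 + |x|) ^ m) := by ring

lemma polyGrowth_id : PolyGrowth (fun x : ℝ => x) :=
  ⟨1, 1, fun x => by simp⟩

lemma polyGrowth_const (c : ℝ) : PolyGrowth (fun _ => c) :=
  ⟨|c|, 0, fun x => by simp⟩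

lemma hasDerivAt_gaussianPDFReal (v : ℝ≥0) (hv : v ≠ 0) (x : ℝ) :
    HasDerivAt (gaussianPDFReal 0 v) (-(x / v) * gaussianPDFReal 0 v x) x := by
  have hv' : (0:ℝ) < v := lt_of_le_of_ne v.coe_nonneg (by exact_mod_cast (Ne.symm hv))
  have h1 : HasDerivAt (fun y : ℝ => -(y - 0)^2 / (2*(v:ℝ)))
      (-(2 * (x - 0)) / (2*(v:ℝ))) x := by
    have := (((hasDerivAt_id x).sub_const 0).pow 2).neg.div_const (2*(v:ℝ))
    simpa using this
  have h2 := (h1.exp.const_mul ((Real.sqrt (2 * π * v))⁻¹))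
  have : HasDerivAt (gaussianPDFReal 0 v)
      ((Real.sqrt (2 * π * v))⁻¹ * (Real.exp (-(x - 0)^2 / (2*(v:ℝ))) *
        (-(2 * (x - 0)) / (2*(v:ℝ))))) x := by
    exact h2
  convert this using 1
  simp only [gaussianPDFReal, sub_zero]
  rw [neg_div]
  field_simp

lemma stein (v : ℝ≥0) (hv : v ≠ 0) {f : ℝ → ℝ} (hf : Differentiable ℝ f)
    (h0 : PolyGrowth f) (h1 : PolyGrowth (deriv f)) :
    ∫ x, x * f x ∂(gaussianReal 0 v) = v * ∫ x, deriv f x ∂(gaussianReal 0 v) := by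
  have hv' : (0:ℝ) < v := lt_of_le_of_ne v.coe_nonneg (by exact_mod_cast (Ne.symm hv))
  set p : ℝ → ℝ := gaussianPDFReal 0 v with hp
  -- integrability of the pieces
  have hA : Integrable (fun x : ℝ => deriv f x * p x) :=
    integrable_mul_pdf v hv (measurable_deriv f) h1
  have hB : Integrable (fun x : ℝ => x / v * f x * p x) := by
    have hm : Measurable (fun x : ℝ => x / (v:ℝ) * f x) :=
      (measurable_id.div_const _).mul hf.continuous.measurable
    have hpg : PolyGrowth (fun x : ℝ => x / (v:ℝ) * f x) := by
      have := polyGrowth_mul (polyGrowth_mul polyGrowth_id h0) (polyGrowth_const ((v:ℝ))⁻¹)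
      obtain ⟨C, n, hC⟩ := this
      exact ⟨C, n, fun x => by
        have := hC x
        simpa [mul_comm, mul_assoc, mul_left_comm, div_eq_mul_inv] using this⟩
    exact (integrable_mul_pdf v hv hm hpg).congr
      (Filter.Eventually.of_forall fun x => by rw [hp])
  have hH : Integrable (fun x : ℝ => f x * p x) :=
    integrable_mul_pdf v hv hf.continuous.measurable h0
  -- FTC
  have hderiv : ∀ x : ℝ, HasDerivAt (fun y => f y * p y)
      (deriv f x * p x - x / v * f x * p x) x := by
    intro x
    have := ((hf x).hasDerivAt.mul (hasDerivAt_gaussianPDFReal v hv x))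
    refine HasDerivAt.congr_deriv this ?_
    simp only [hp]; ring
  have hzero : ∫ x, (deriv f x * p x - x / v * f x * p x) = 0 :=
    integral_eq_zero_of_hasDerivAt_of_integrable hderiv (hA.sub hB) hH
  rw [integral_sub hA hB] at hzero
  have hsplit : ∫ x, x / (v:ℝ) * f x * p x = (1/(v:ℝ)) * ∫ x, x * f x * p x := by
    rw [← integral_const_mul]
    refine integral_congr_ae (Filter.Eventually.of_forall fun x => ?_)
    field_simp
  rw [integral_gaussian_eq v hv, integral_gaussian_eq v hv]
  have hzero' : ∫ x, deriv f x * p x = (1/(v:ℝ)) * ∫ x, x * f x * p x := by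
    rw [← hsplit]; linarith
  rw [hzero']
  have : (fun x => x * f x * p x) = fun x => (x * f x) * p x := by funext x; ring
  rw [← this]
  field_simp

lemma gaussian_mean_zero (v : ℝ≥0) : ∫ x, x ∂(gaussianReal 0 v) = 0 := by
  by_cases hv : v = 0
  · rw [hv, gaussianReal_zero_var]
    simp [integral_dirac]
  · have h := stein v hv (f := fun _ => (1:ℝ)) (differentiable_const 1)
      (polyGrowth_const 1) (by simpa [deriv_const'] using polyGrowth_const 0)
    simpa [deriv_const'] using h

section OmegaLevel
variable {Ω : Type*} [MeasureSpace Ω] {μ : Measure Ω} [IsProbabilityMeasure μ]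

lemma aemeasurable_of_gaussian {X : Ω → ℝ} {v : ℝ≥0}
    (hX : Measure.map X μ = gaussianReal 0 v) : AEMeasurable X μ :=
  aemeasurable_of_map_neZero (by rw [hX]; infer_instance)

lemma integrable_comp_gaussian {X : Ω → ℝ} {v : ℝ≥0}
    (hX : Measure.map X μ = gaussianReal 0 v) {F : ℝ → ℝ} (hF : Measurable F)
    (hg : PolyGrowth F) : Integrable (fun ω => F (X ω)) μ := by
  have hXm := aemeasurable_of_gaussian hX
  have := (integrable_map_measure hF.aestronglyMeasurable hXm).mp
    (by rw [hX]; exact integrable_gaussian_of_poly v hF hg)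
  exact this

lemma integral_comp_gaussian {X : Ω → ℝ} {v : ℝ≥0}
    (hX : Measure.map X μ = gaussianReal 0 v) {F : ℝ → ℝ} (hF : Measurable F) :
    ∫ ω, F (X ω) ∂μ = ∫ x, F x ∂(gaussianReal 0 v) := by
  have hXm := aemeasurable_of_gaussian hX
  rw [← hX, integral_map hXm hF.aestronglyMeasurable]

end OmegaLevel
set_option maxHeartbeats 1600000 in
/-- First partial derivative of the population loss at the origin:
`∂φ/∂x₁(0,0) = E[2(f(g)f'(g)a₁ − f(a₁)f'(g)a₁)] = −2(1+λη₁²)·E[f'(a₁)]·E[f'(g)]`. -/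
theorem population_loss_first_partial
    {Ω : Type*} [MeasureSpace Ω] (μ : Measure Ω) [IsProbabilityMeasure μ]
    (lam η₁ η₂ : ℝ) (hlam : 0 < lam) (hη₁ : η₁ ∈ Set.Icc (0 : ℝ) 1)
    (hη₂ : η₂ = Real.sqrt (1 - η₁ ^ 2))
    (f : ℝ → ℝ) (hf : Differentiable ℝ f) (hf' : Differentiable ℝ (deriv f))
    (hg0 : PolyGrowth f) (hg1 : PolyGrowth (deriv f)) (hg2 : PolyGrowth (deriv (deriv f)))
    (a₁ a₂ g ε W : Ω → ℝ)
    (hlaw₁ : Measure.map a₁ μ = gaussianReal 0 (Real.toNNReal (1 + lam * η₁ ^ 2)))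
    (hlawW : Measure.map W μ = gaussianReal 0 1)
    (hlawg : Measure.map g μ = gaussianReal 0 1)
    (hindep₁W : IndepFun a₁ W μ)
    (hindepg : IndepFun (fun ω => (a₁ ω, a₂ ω)) g μ)
    (hdecomp : ∀ ω, a₂ ω = (lam * η₁ * η₂ / (1 + lam * η₁ ^ 2)) * a₁ ω +
      Real.sqrt (1 + lam * η₂ ^ 2 - (lam * η₁ * η₂) ^ 2 / (1 + lam * η₁ ^ 2)) * W ω)
    (hεint : Integrable (fun ω => (ε ω) ^ 2) μ)
    (φ : ℝ × ℝ → ℝ)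
    (hφ : ∀ p : ℝ × ℝ, φ p =
      (∫ ω, (f (a₁ ω * p.1 + a₂ ω * p.2 + Real.sqrt (1 - p.1 ^ 2 - p.2 ^ 2) * g ω)
          - f (a₁ ω)) ^ 2 ∂μ) + ∫ ω, (ε ω) ^ 2 ∂μ) :
    deriv (fun x₁ => φ (x₁, 0)) 0 =
      (∫ ω, 2 * (f (g ω) * deriv f (g ω) * a₁ ω - f (a₁ ω) * deriv f (g ω) * a₁ ω) ∂μ) ∧
    (∫ ω, 2 * (f (g ω) * deriv f (g ω) * a₁ ω - f (a₁ ω) * deriv f (g ω) * a₁ ω) ∂μ) =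
      -2 * (1 + lam * η₁ ^ 2) * (∫ ω, deriv f (a₁ ω) ∂μ) * (∫ ω, deriv f (g ω) ∂μ) := by
  -- common setup
  have hv₁pos : (0:ℝ) < 1 + lam * η₁ ^ 2 := by nlinarith [sq_nonneg η₁]
  set v₁ : NNReal := Real.toNNReal (1 + lam * η₁ ^ 2) with hv₁def
  have hv₁ : v₁ ≠ 0 := by
    simp only [hv₁def, ne_eq, Real.toNNReal_eq_zero, not_le]
    exact hv₁pos
  have hv₁coe : (v₁ : ℝ) = 1 + lam * η₁ ^ 2 := Real.coe_toNNReal _ hv₁pos.le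
  have ha : AEMeasurable a₁ μ := aemeasurable_of_gaussian hlaw₁
  have hgm : AEMeasurable g μ := aemeasurable_of_gaussian hlawg
  have hfc : Continuous f := hf.continuous
  have hf'c : Continuous (deriv f) := hf'.continuous
  have hind : IndepFun a₁ g μ := hindepg.comp measurable_fst measurable_id
  -- part 2
  have part2 : (∫ ω, 2 * (f (g ω) * deriv f (g ω) * a₁ ω - f (a₁ ω) * deriv f (g ω) * a₁ ω) ∂μ) =
      -2 * (1 + lam * η₁ ^ 2) * (∫ ω, deriv f (a₁ ω) ∂μ) * (∫ ω, deriv f (g ω) ∂μ) := by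
    set P : ℝ → ℝ := fun y => f y * deriv f y with hP
    set Q : ℝ → ℝ := fun x => f x * x with hQ
    have hPm : Measurable P := (hfc.mul hf'c).measurable
    have hQm : Measurable Q := (hfc.mul continuous_id).measurable
    have hPpg : PolyGrowth P := polyGrowth_mul hg0 hg1
    have hQpg : PolyGrowth Q := polyGrowth_mul hg0 polyGrowth_id
    -- integrability
    have hPgint : Integrable (fun ω => P (g ω)) μ := integrable_comp_gaussian hlawg hPm hPpg
    have hQaint : Integrable (fun ω => Q (a₁ ω)) μ := integrable_comp_gaussian hlaw₁ hQm hQpg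
    have ha₁int : Integrable a₁ μ :=
      integrable_comp_gaussian hlaw₁ measurable_id polyGrowth_id
    have hf'gint : Integrable (fun ω => deriv f (g ω)) μ :=
      integrable_comp_gaussian hlawg hf'c.measurable hg1
    -- independence of composed maps
    have hindPg : IndepFun (fun ω => P (g ω)) a₁ μ := hind.symm.comp hPm measurable_id
    have hindQa : IndepFun (fun ω => Q (a₁ ω)) (fun ω => deriv f (g ω)) μ :=
      hind.comp hQm hf'c.measurable
    have hT1int : Integrable (fun ω => P (g ω) * a₁ ω) μ := hindPg.integrable_mul hPgint ha₁int
    have hT2int : Integrable (fun ω => Q (a₁ ω) * deriv f (g ω)) μ :=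
      hindQa.integrable_mul hQaint hf'gint
    -- compute term 1
    have hT1 : ∫ ω, P (g ω) * a₁ ω ∂μ = 0 := by
      have h := hindPg.integral_mul_eq_mul_integral hPgint.aestronglyMeasurable ha₁int.aestronglyMeasurable
      have ha₁zero : ∫ ω, a₁ ω ∂μ = 0 := by
        have := integral_comp_gaussian hlaw₁ (F := fun x => x) measurable_id
        rw [this, gaussian_mean_zero]
      calc ∫ ω, P (g ω) * a₁ ω ∂μ = ∫ ω, ((fun ω => P (g ω)) * a₁) ω ∂μ := rfl
        _ = (∫ ω, P (g ω) ∂μ) * ∫ ω, a₁ ω ∂μ := h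
        _ = 0 := by rw [ha₁zero, mul_zero]
    -- compute term 2 via Stein
    have hQa : ∫ ω, Q (a₁ ω) ∂μ = (1 + lam * η₁ ^ 2) * ∫ ω, deriv f (a₁ ω) ∂μ := by
      rw [integral_comp_gaussian hlaw₁ hQm]
      have hcomm : ∫ x, Q x ∂(gaussianReal 0 v₁) = ∫ x, x * f x ∂(gaussianReal 0 v₁) := by
        refine integral_congr_ae (Filter.Eventually.of_forall fun x => ?_)
        simp [hQ, mul_comm]
      rw [hcomm, stein v₁ hv₁ hf hg0 hg1, hv₁coe,
        ← integral_comp_gaussian hlaw₁ hf'c.measurable]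
    have hT2 : ∫ ω, Q (a₁ ω) * deriv f (g ω) ∂μ =
        (1 + lam * η₁ ^ 2) * (∫ ω, deriv f (a₁ ω) ∂μ) * ∫ ω, deriv f (g ω) ∂μ := by
      have h := hindQa.integral_mul_eq_mul_integral hQaint.aestronglyMeasurable hf'gint.aestronglyMeasurable
      calc ∫ ω, Q (a₁ ω) * deriv f (g ω) ∂μ
          = ∫ ω, ((fun ω => Q (a₁ ω)) * fun ω => deriv f (g ω)) ω ∂μ := rfl
        _ = (∫ ω, Q (a₁ ω) ∂μ) * ∫ ω, deriv f (g ω) ∂μ := h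
        _ = _ := by rw [hQa]
    -- assemble
    have hre : (fun ω => 2 * (f (g ω) * deriv f (g ω) * a₁ ω - f (a₁ ω) * deriv f (g ω) * a₁ ω))
        = fun ω => 2 * (P (g ω) * a₁ ω - Q (a₁ ω) * deriv f (g ω)) := by
      funext ω; simp only [hP, hQ]; ring
    rw [hre]
    rw [integral_const_mul, integral_sub hT1int hT2int, hT1, hT2]
    ring
  refine ⟨?_, part2⟩
  -- part 1 : differentiation under the integral sign
  obtain ⟨C, n, hC⟩ := hg0
  obtain ⟨C', m, hC'⟩ := hg1
  have hC0 : 0 ≤ C := le_trans (abs_nonneg (f 0)) (by simpa using hC 0)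
  have hC'0 : 0 ≤ C' := le_trans (abs_nonneg (deriv f 0)) (by simpa using hC' 0)
  set B : Ω → ℝ := fun ω => (1 + |a₁ ω|) * (1 + |g ω|) with hBdef
  have hB1 : ∀ ω, (1:ℝ) ≤ B ω := by
    intro ω
    have h1 : (1:ℝ) ≤ 1 + |a₁ ω| := by simp [abs_nonneg]
    have h2 : (1:ℝ) ≤ 1 + |g ω| := by simp [abs_nonneg]
    calc (1:ℝ) = 1 * 1 := by ring
      _ ≤ (1 + |a₁ ω|) * (1 + |g ω|) := by
          exact mul_le_mul h1 h2 zero_le_one (by linarith)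
  have hBint : ∀ k : ℕ, Integrable (fun ω => B ω ^ k) μ := by
    intro k
    have hm1 : Measurable fun x : ℝ => (1 + |x|) ^ k :=
      ((continuous_const.add continuous_abs).pow k).measurable
    have hpg1 : PolyGrowth fun x : ℝ => (1 + |x|) ^ k :=
      ⟨1, k, fun x => by rw [abs_of_nonneg (by positivity)]; simp⟩
    have h1 : Integrable (fun ω => (1 + |a₁ ω|) ^ k) μ :=
      integrable_comp_gaussian hlaw₁ hm1 hpg1
    have h2 : Integrable (fun ω => (1 + |g ω|) ^ k) μ :=
      integrable_comp_gaussian hlawg hm1 hpg1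
    have hindk : IndepFun (fun ω => (1 + |a₁ ω|) ^ k) (fun ω => (1 + |g ω|) ^ k) μ :=
      hind.comp hm1 hm1
    have := hindk.integrable_mul h1 h2
    refine this.congr (Filter.Eventually.of_forall fun ω => ?_)
    simp only [hBdef, Pi.mul_apply, mul_pow]
  -- uniform pointwise bounds on the ball
  have hiball : ∀ (x : ℝ), x ∈ Metric.ball (0:ℝ) (1/2) →
      (0 < Real.sqrt (1 - x^2) ∧ Real.sqrt (1 - x^2) ≤ 1 ∧ |x| ≤ Real.sqrt (1 - x^2)) := by
    intro x hx
    rw [Metric.mem_ball, Real.dist_eq, sub_zero] at hx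
    have hx2 : x^2 < 1/4 := by
      have := abs_nonneg x
      nlinarith [sq_abs x]
    have hpos : (0:ℝ) < 1 - x^2 := by nlinarith
    have hq : Real.sqrt ((1:ℝ)/4) = 1/2 := by
      rw [show (1/4 : ℝ) = (1/2)^2 by norm_num, Real.sqrt_sq (by norm_num : (0:ℝ) ≤ 1/2)]
    have h12 : (1/2 : ℝ) ≤ Real.sqrt (1 - x^2) := by
      rw [← hq]
      exact Real.sqrt_le_sqrt (by nlinarith)
    refine ⟨Real.sqrt_pos.mpr hpos, ?_, le_trans hx.le h12⟩
    have h1 : Real.sqrt (1 - x^2) ≤ Real.sqrt 1 := Real.sqrt_le_sqrt (by nlinarith)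
    simpa using h1
  have hfu : ∀ (ω : Ω) (y : ℝ), |y| ≤ |a₁ ω| + |g ω| → |f y| ≤ C * B ω ^ n := by
    intro ω y hy
    refine (hC y).trans (mul_le_mul_of_nonneg_left ?_ hC0)
    refine pow_le_pow_left₀ (by positivity) ?_ n
    have : 1 + |y| ≤ 1 + |a₁ ω| + |g ω| := by linarith
    refine this.trans ?_
    simp only [hBdef]
    nlinarith [abs_nonneg (a₁ ω), abs_nonneg (g ω), mul_nonneg (abs_nonneg (a₁ ω)) (abs_nonneg (g ω))]
  have hf'u : ∀ (ω : Ω) (y : ℝ), |y| ≤ |a₁ ω| + |g ω| → |deriv f y| ≤ C' * B ω ^ m := by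
    intro ω y hy
    refine (hC' y).trans (mul_le_mul_of_nonneg_left ?_ hC'0)
    refine pow_le_pow_left₀ (by positivity) ?_ m
    have : 1 + |y| ≤ 1 + |a₁ ω| + |g ω| := by linarith
    refine this.trans ?_
    simp only [hBdef]
    nlinarith [abs_nonneg (a₁ ω), abs_nonneg (g ω), mul_nonneg (abs_nonneg (a₁ ω)) (abs_nonneg (g ω))]
  have huabs : ∀ (ω : Ω) (x : ℝ), x ∈ Metric.ball (0:ℝ) (1/2) →
      |a₁ ω * x + Real.sqrt (1 - x^2) * g ω| ≤ |a₁ ω| + |g ω| := by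
    intro ω x hx
    obtain ⟨hs0, hs1, hxs⟩ := hiball x hx
    have hxle1 : |x| ≤ 1 := le_trans hxs hs1
    calc |a₁ ω * x + Real.sqrt (1 - x^2) * g ω| ≤ |a₁ ω * x| + |Real.sqrt (1 - x^2) * g ω| :=
          abs_add_le _ _
      _ ≤ |a₁ ω| + |g ω| := by
          rw [abs_mul, abs_mul, abs_of_nonneg hs0.le]
          have h1 : |a₁ ω| * |x| ≤ |a₁ ω| * 1 :=
            mul_le_mul_of_nonneg_left hxle1 (abs_nonneg _)
          have h2 : Real.sqrt (1 - x^2) * |g ω| ≤ 1 * |g ω| :=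
            mul_le_mul_of_nonneg_right hs1 (abs_nonneg _)
          linarith [h1, h2]
  -- the key derivative bound on the ball
  have hkey : ∀ (ω : Ω), ∀ x ∈ Metric.ball (0:ℝ) (1/2),
      ‖2 * (f (a₁ ω * x + Real.sqrt (1 - x^2) * g ω) - f (a₁ ω)) *
        deriv f (a₁ ω * x + Real.sqrt (1 - x^2) * g ω) *
        (a₁ ω - x / Real.sqrt (1 - x^2) * g ω)‖ ≤ 4 * C * C' * B ω ^ (n + m + 1) := by
    intro ω x hx
    obtain ⟨hs0, hs1, hxs⟩ := hiball x hx
    set u := a₁ ω * x + Real.sqrt (1 - x^2) * g ω with hu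
    have h1 : |f u| ≤ C * B ω ^ n := hfu ω u (huabs ω x hx)
    have h2 : |f (a₁ ω)| ≤ C * B ω ^ n := by
      refine hfu ω (a₁ ω) ?_
      linarith [abs_nonneg (g ω)]
    have h3 : |deriv f u| ≤ C' * B ω ^ m := hf'u ω u (huabs ω x hx)
    have h4 : |a₁ ω - x / Real.sqrt (1 - x^2) * g ω| ≤ B ω := by
      have hxd : |x / Real.sqrt (1 - x^2)| ≤ 1 := by
        rw [abs_div, abs_of_nonneg hs0.le]
        exact div_le_one_of_le₀ hxs hs0.le
      calc |a₁ ω - x / Real.sqrt (1 - x^2) * g ω|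
          ≤ |a₁ ω| + |x / Real.sqrt (1 - x^2) * g ω| := abs_sub _ _
        _ ≤ |a₁ ω| + |g ω| := by
            rw [abs_mul]
            nlinarith [abs_nonneg (g ω), mul_le_mul_of_nonneg_right hxd (abs_nonneg (g ω))]
        _ ≤ B ω := by
            simp only [hBdef]
            nlinarith [abs_nonneg (a₁ ω), abs_nonneg (g ω),
              mul_nonneg (abs_nonneg (a₁ ω)) (abs_nonneg (g ω))]
    have hBpos : (0:ℝ) < B ω := lt_of_lt_of_le one_pos (hB1 ω)
    have h5 : |f u - f (a₁ ω)| ≤ 2 * (C * B ω ^ n) := by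
      calc |f u - f (a₁ ω)| ≤ |f u| + |f (a₁ ω)| := abs_sub _ _
        _ ≤ 2 * (C * B ω ^ n) := by linarith
    rw [Real.norm_eq_abs, abs_mul, abs_mul, abs_mul, abs_two]
    calc 2 * |f u - f (a₁ ω)| * |deriv f u| * |a₁ ω - x / Real.sqrt (1 - x ^ 2) * g ω|
        ≤ 2 * (2 * (C * B ω ^ n)) * (C' * B ω ^ m) * B ω := by
          gcongr <;> positivity
      _ = 4 * C * C' * B ω ^ (n + m + 1) := by ring
  -- measurability
  have hFmeas : ∀ (x : ℝ), AEStronglyMeasurable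
      (fun ω => (f (a₁ ω * x + Real.sqrt (1 - x^2) * g ω) - f (a₁ ω))^2) μ := by
    intro x
    have h1 : AEMeasurable (fun ω => a₁ ω * x + Real.sqrt (1 - x^2) * g ω) μ :=
      (ha.mul_const x).add (hgm.const_mul _)
    exact (((hfc.measurable.comp_aemeasurable h1).sub
      (hfc.measurable.comp_aemeasurable ha)).pow_const 2).aestronglyMeasurable
  have hF'meas0 : AEStronglyMeasurable
      (fun ω => 2 * (f (a₁ ω * 0 + Real.sqrt (1 - (0:ℝ)^2) * g ω) - f (a₁ ω)) *
        deriv f (a₁ ω * 0 + Real.sqrt (1 - (0:ℝ)^2) * g ω) *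
        (a₁ ω - 0 / Real.sqrt (1 - (0:ℝ)^2) * g ω)) μ := by
    have h1 : AEMeasurable (fun ω => a₁ ω * 0 + Real.sqrt (1 - (0:ℝ)^2) * g ω) μ :=
      (ha.mul_const 0).add (hgm.const_mul _)
    have h2 := hfc.measurable.comp_aemeasurable h1
    have h3 := hf'c.measurable.comp_aemeasurable h1
    have h4 : AEMeasurable (fun ω => a₁ ω - 0 / Real.sqrt (1 - (0:ℝ)^2) * g ω) μ :=
      ha.sub (hgm.const_mul _)
    exact ((((h2.sub (hfc.measurable.comp_aemeasurable ha)).const_mul 2).mul h3).mul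
      h4).aestronglyMeasurable
  -- integrability of F 0
  have h0ball : (0:ℝ) ∈ Metric.ball (0:ℝ) (1/2) := Metric.mem_ball_self one_half_pos
  have hFint : Integrable
      (fun ω => (f (a₁ ω * 0 + Real.sqrt (1 - (0:ℝ)^2) * g ω) - f (a₁ ω))^2) μ := by
    refine ((hBint (2*n)).const_mul (4*C^2)).mono' (hFmeas 0)
      (Filter.Eventually.of_forall fun ω => ?_)
    have h1 : |f (a₁ ω * 0 + Real.sqrt (1-(0:ℝ)^2) * g ω)| ≤ C * B ω ^ n :=
      hfu ω _ (huabs ω 0 h0ball)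
    have h2 : |f (a₁ ω)| ≤ C * B ω ^ n := hfu ω _ (by linarith [abs_nonneg (g ω)])
    have h3 : |f (a₁ ω * 0 + Real.sqrt (1-(0:ℝ)^2) * g ω) - f (a₁ ω)| ≤ 2*(C*B ω^n) := by
      calc |f (a₁ ω * 0 + Real.sqrt (1-(0:ℝ)^2) * g ω) - f (a₁ ω)|
          ≤ |f (a₁ ω * 0 + Real.sqrt (1-(0:ℝ)^2) * g ω)| + |f (a₁ ω)| := abs_sub _ _
        _ ≤ 2*(C*B ω^n) := by linarith
    rw [Real.norm_eq_abs, abs_of_nonneg (sq_nonneg _)]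
    calc (f (a₁ ω * 0 + Real.sqrt (1-(0:ℝ)^2) * g ω) - f (a₁ ω))^2
        = |f (a₁ ω * 0 + Real.sqrt (1-(0:ℝ)^2) * g ω) - f (a₁ ω)|^2 := (sq_abs _).symm
      _ ≤ (2*(C*B ω^n))^2 := pow_le_pow_left₀ (abs_nonneg _) h3 2
      _ = 4*C^2 * B ω^(2*n) := by ring
  -- differentiability on the ball
  have hdiff : ∀ (ω : Ω), ∀ x ∈ Metric.ball (0:ℝ) (1/2),
      HasDerivAt (fun y => (f (a₁ ω * y + Real.sqrt (1 - y^2) * g ω) - f (a₁ ω))^2)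
        (2 * (f (a₁ ω * x + Real.sqrt (1 - x^2) * g ω) - f (a₁ ω)) *
          deriv f (a₁ ω * x + Real.sqrt (1 - x^2) * g ω) *
          (a₁ ω - x / Real.sqrt (1 - x^2) * g ω)) x := by
    intro ω x hx
    rw [Metric.mem_ball, Real.dist_eq, sub_zero] at hx
    have hpos : (0:ℝ) < 1 - x^2 := by nlinarith [sq_abs x, abs_nonneg x]
    have hs0 : (0:ℝ) < Real.sqrt (1 - x^2) := Real.sqrt_pos.mpr hpos
    have hinner : HasDerivAt (fun y : ℝ => 1 - y^2) (-(2*x)) x := by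
      simpa using ((hasDerivAt_pow 2 x).const_sub 1)
    have hsqrt : HasDerivAt (fun y => Real.sqrt (1 - y^2))
        (-(2*x) / (2 * Real.sqrt (1 - x^2))) x := hinner.sqrt (ne_of_gt hpos)
    have hlin : HasDerivAt (fun y => a₁ ω * y + Real.sqrt (1 - y^2) * g ω)
        (a₁ ω + (-(2*x) / (2 * Real.sqrt (1 - x^2))) * g ω) x := by
      have h1 : HasDerivAt (fun y => a₁ ω * y) (a₁ ω) x := by
        simpa using (hasDerivAt_id x).const_mul (a₁ ω)
      exact h1.add (hsqrt.mul_const (g ω))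
    have hcomp : HasDerivAt (fun y => f (a₁ ω * y + Real.sqrt (1 - y^2) * g ω))
        (deriv f (a₁ ω * x + Real.sqrt (1 - x^2) * g ω) *
          (a₁ ω + (-(2*x) / (2 * Real.sqrt (1 - x^2))) * g ω)) x :=
      (hf (a₁ ω * x + Real.sqrt (1 - x^2) * g ω)).hasDerivAt.comp x hlin
    have hfinal := (hcomp.sub_const (f (a₁ ω))).pow 2
    have hsne : Real.sqrt (1 - x^2) ≠ 0 := ne_of_gt hs0
    have harg : -(2*x) / (2 * Real.sqrt (1 - x^2)) = -(x / Real.sqrt (1 - x^2)) := by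
      field_simp
    refine HasDerivAt.congr_deriv hfinal ?_
    rw [harg]
    push_cast
    ring
  -- apply differentiation under the integral sign
  have key := hasDerivAt_integral_of_dominated_loc_of_deriv_le
    (F := fun (x : ℝ) (ω : Ω) => (f (a₁ ω * x + Real.sqrt (1 - x^2) * g ω) - f (a₁ ω))^2)
    (F' := fun (x : ℝ) (ω : Ω) => 2 * (f (a₁ ω * x + Real.sqrt (1 - x^2) * g ω) - f (a₁ ω)) *
      deriv f (a₁ ω * x + Real.sqrt (1 - x^2) * g ω) *
      (a₁ ω - x / Real.sqrt (1 - x^2) * g ω))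
    (bound := fun ω => 4 * C * C' * B ω ^ (n + m + 1))
    (x₀ := 0) (s := Metric.ball 0 (1/2)) (Metric.ball_mem_nhds 0 one_half_pos)
    (Filter.Eventually.of_forall fun x => hFmeas x) hFint hF'meas0
    (Filter.Eventually.of_forall hkey) ((hBint (n+m+1)).const_mul (4*C*C'))
    (Filter.Eventually.of_forall hdiff)
  -- conclude
  have hfun : (fun x₁ : ℝ => φ (x₁, 0)) =
      fun x => (∫ ω, (f (a₁ ω * x + Real.sqrt (1 - x^2) * g ω) - f (a₁ ω))^2 ∂μ)
        + ∫ ω, (ε ω)^2 ∂μ := by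
    funext x
    rw [hφ]
    norm_num
  have hder := (key.2.add_const (∫ ω, (ε ω)^2 ∂μ)).deriv
  rw [hfun, hder]
  refine integral_congr_ae (Filter.Eventually.of_forall fun ω => ?_)
  norm_num [Real.sqrt_one]
  ring
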